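/- Let L = [[A,B],[C,D]] be an (n+m)×(n+m) complex block matrix, ψ a complex polynomial, and write ψ(L) = [[Ã,B̃],[C̃,D̃]] with the same block sizes. If spectrum(Ã) ∩ spectrum(ψ(L)) = ∅, then the pair (Ã,B̃) is controllable and (Ã,C̃) is observable. -/

import Mathlib

open Matrix

/-- PBH controllability: `rank [λI − A, B] = n` for all `λ ∈ ℂ`. -/
def Controllable {n m : Type*} [Fintype n] [Fintype m] [DecidableEq n]
    (A : Matrix n n ℂ) (B : Matrix n m ℂ) : Prop :=
  ∀ lam : ℂ, (Matrix.fromCols (lam • (1 : Matrix n n ℂ) - A) B).rank = Fintype.card n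

/-- PBH observability: `rank [λI − A; C] = n` for all `λ ∈ ℂ`. -/
def Observable {n p : Type*} [Fintype n] [Fintype p] [DecidableEq n]
    (A : Matrix n n ℂ) (C : Matrix p n ℂ) : Prop :=
  ∀ lam : ℂ, (Matrix.fromRows (lam • (1 : Matrix n n ℂ) - A) C).rank = Fintype.card n

/-- If a matrix with `n` rows has rank `< n`, there is a nonzero left null vector. -/
lemma exists_vecMul_eq_zero {n : ℕ} {r : Type*} [Fintype r]
    (M : Matrix (Fin n) r ℂ) (hM : M.rank ≠ n) :
    ∃ w : Fin n → ℂ, w ≠ 0 ∧ w ᵥ* M = 0 := by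
  by_contra hc
  push_neg at hc
  have hinj : Function.Injective Mᵀ.mulVecLin := by
    rw [← LinearMap.ker_eq_bot, LinearMap.ker_eq_bot']
    intro w hw
    by_contra hw0
    exact (hc w hw0) (by simpa [Matrix.mulVec_transpose] using hw)
  have : Mᵀ.rank = n := by
    have := LinearMap.finrank_range_of_inj hinj
    simpa [Matrix.rank, Module.finrank_pi] using this
  exact hM (by rwa [Matrix.rank_transpose] at this)

lemma exists_mulVec_eq_zero {n : ℕ} {r : Type*} [Fintype r]
    (M : Matrix r (Fin n) ℂ) (hM : M.rank ≠ n) :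
    ∃ w : Fin n → ℂ, w ≠ 0 ∧ M *ᵥ w = 0 := by
  obtain ⟨w, hw, hw0⟩ := exists_vecMul_eq_zero Mᵀ (by rwa [Matrix.rank_transpose])
  exact ⟨w, hw, by simpa [Matrix.vecMul_transpose] using hw0⟩

lemma mem_spectrum_of_vecMul {n : Type*} [Fintype n] [DecidableEq n]
    (M : Matrix n n ℂ) (lam : ℂ) (w : n → ℂ) (hw : w ≠ 0)
    (h : w ᵥ* (lam • (1 : Matrix n n ℂ) - M) = 0) : lam ∈ spectrum ℂ M := by
  rw [spectrum.mem_iff]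
  intro hU
  have halg : (algebraMap ℂ (Matrix n n ℂ)) lam = lam • 1 := Algebra.algebraMap_eq_smul_one lam
  rw [halg] at hU
  have hinj := Matrix.vecMul_injective_iff_isUnit.2 hU
  have : w ᵥ* (lam • (1 : Matrix n n ℂ) - M) = (0 : n → ℂ) ᵥ* (lam • (1 : Matrix n n ℂ) - M) := by
    simpa using h
  exact hw (hinj this)

lemma mem_spectrum_of_mulVec {n : Type*} [Fintype n] [DecidableEq n]
    (M : Matrix n n ℂ) (lam : ℂ) (w : n → ℂ) (hw : w ≠ 0)
    (h : (lam • (1 : Matrix n n ℂ) - M) *ᵥ w = 0) : lam ∈ spectrum ℂ M := by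
  rw [spectrum.mem_iff]
  intro hU
  have halg : (algebraMap ℂ (Matrix n n ℂ)) lam = lam • 1 := Algebra.algebraMap_eq_smul_one lam
  rw [halg] at hU
  have hinj := Matrix.mulVec_injective_iff_isUnit.2 hU
  have : (lam • (1 : Matrix n n ℂ) - M) *ᵥ w = (lam • (1 : Matrix n n ℂ) - M) *ᵥ (0 : n → ℂ) := by
    simpa using h
  exact hw (hinj this)

theorem minimal_of_disjoint_spectra_poly (n m : ℕ)
    (A : Matrix (Fin n) (Fin n) ℂ) (B : Matrix (Fin n) (Fin m) ℂ)
    (C : Matrix (Fin m) (Fin n) ℂ) (D : Matrix (Fin m) (Fin m) ℂ)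
    (ψ : Polynomial ℂ)
    (h : spectrum ℂ ((Polynomial.aeval (Matrix.fromBlocks A B C D) ψ).toBlocks₁₁) ∩
      spectrum ℂ (Polynomial.aeval (Matrix.fromBlocks A B C D) ψ) = ∅) :
    Controllable ((Polynomial.aeval (Matrix.fromBlocks A B C D) ψ).toBlocks₁₁)
        ((Polynomial.aeval (Matrix.fromBlocks A B C D) ψ).toBlocks₁₂) ∧
      Observable ((Polynomial.aeval (Matrix.fromBlocks A B C D) ψ).toBlocks₁₁)
        ((Polynomial.aeval (Matrix.fromBlocks A B C D) ψ).toBlocks₂₁) := by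
  set L : Matrix (Fin n ⊕ Fin m) (Fin n ⊕ Fin m) ℂ :=
    Polynomial.aeval (Matrix.fromBlocks A B C D) ψ with hL
  have hblocks : L = Matrix.fromBlocks L.toBlocks₁₁ L.toBlocks₁₂ L.toBlocks₂₁ L.toBlocks₂₂ :=
    (Matrix.fromBlocks_toBlocks L).symm
  constructor
  · intro lam
    by_contra hrank
    simp only [Fintype.card_fin] at hrank
    obtain ⟨w, hw, hw0⟩ := exists_vecMul_eq_zero
      (Matrix.fromCols (lam • (1 : Matrix (Fin n) (Fin n) ℂ) - L.toBlocks₁₁) L.toBlocks₁₂) hrank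
    rw [Matrix.vecMul_fromCols] at hw0
    have h1 : w ᵥ* (lam • (1 : Matrix (Fin n) (Fin n) ℂ) - L.toBlocks₁₁) = 0 := by
      have := congrArg (· ∘ Sum.inl) hw0; ext i; exact congrFun this i
    have h2 : w ᵥ* L.toBlocks₁₂ = 0 := by
      have := congrArg (· ∘ Sum.inr) hw0; ext i; exact congrFun this i
    have hA : lam ∈ spectrum ℂ L.toBlocks₁₁ := mem_spectrum_of_vecMul _ lam w hw h1
    have hL' : lam ∈ spectrum ℂ L := by
      apply mem_spectrum_of_vecMul _ lam (Sum.elim w 0)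
      · intro hcontra
        apply hw
        ext i
        exact congrFun hcontra (Sum.inl i)
      · have hsub : lam • (1 : Matrix (Fin n ⊕ Fin m) (Fin n ⊕ Fin m) ℂ) - L =
            Matrix.fromBlocks (lam • 1 - L.toBlocks₁₁) (-L.toBlocks₁₂)
              (-L.toBlocks₂₁) (lam • 1 - L.toBlocks₂₂) := by
          rw [hblocks]
          simp [← Matrix.fromBlocks_one, Matrix.fromBlocks_smul, Matrix.fromBlocks_neg, Matrix.fromBlocks_add,
            sub_eq_add_neg]
        rw [hsub, Matrix.vecMul_fromBlocks]
        have e1 : (Sum.elim w (0 : Fin m → ℂ)) ∘ Sum.inl = w := rfl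
        have e2 : (Sum.elim w (0 : Fin m → ℂ)) ∘ Sum.inr = 0 := rfl
        rw [e1, e2]
        ext (i | i) <;>
          simp [h1, h2, Matrix.vecMul_neg, funext_iff.1 h1, funext_iff.1 h2,
            Matrix.zero_vecMul]
    have : lam ∈ (spectrum ℂ L.toBlocks₁₁ ∩ spectrum ℂ L) := ⟨hA, hL'⟩
    rw [h] at this
    exact this
  · intro lam
    by_contra hrank
    simp only [Fintype.card_fin] at hrank
    obtain ⟨w, hw, hw0⟩ := exists_mulVec_eq_zero
      (Matrix.fromRows (lam • (1 : Matrix (Fin n) (Fin n) ℂ) - L.toBlocks₁₁) L.toBlocks₂₁) hrank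
    rw [Matrix.fromRows_mulVec] at hw0
    have h1 : (lam • (1 : Matrix (Fin n) (Fin n) ℂ) - L.toBlocks₁₁) *ᵥ w = 0 := by
      have := congrArg (· ∘ Sum.inl) hw0; ext i; exact congrFun this i
    have h2 : L.toBlocks₂₁ *ᵥ w = 0 := by
      have := congrArg (· ∘ Sum.inr) hw0; ext i; exact congrFun this i
    have hA : lam ∈ spectrum ℂ L.toBlocks₁₁ := mem_spectrum_of_mulVec _ lam w hw h1
    have hL' : lam ∈ spectrum ℂ L := by
      apply mem_spectrum_of_mulVec _ lam (Sum.elim w 0)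
      · intro hcontra
        apply hw
        ext i
        exact congrFun hcontra (Sum.inl i)
      · have hsub : lam • (1 : Matrix (Fin n ⊕ Fin m) (Fin n ⊕ Fin m) ℂ) - L =
            Matrix.fromBlocks (lam • 1 - L.toBlocks₁₁) (-L.toBlocks₁₂)
              (-L.toBlocks₂₁) (lam • 1 - L.toBlocks₂₂) := by
          rw [hblocks]
          simp [← Matrix.fromBlocks_one, Matrix.fromBlocks_smul, Matrix.fromBlocks_neg, Matrix.fromBlocks_add,
            sub_eq_add_neg]
        rw [hsub, Matrix.fromBlocks_mulVec]
        have e1 : (Sum.elim w (0 : Fin m → ℂ)) ∘ Sum.inl = w := rfl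
        have e2 : (Sum.elim w (0 : Fin m → ℂ)) ∘ Sum.inr = 0 := rfl
        rw [e1, e2]
        ext (i | i) <;>
          simp [h1, h2, Matrix.neg_mulVec, funext_iff.1 h1, funext_iff.1 h2,
            Matrix.mulVec_zero]
    have : lam ∈ (spectrum ℂ L.toBlocks₁₁ ∩ spectrum ℂ L) := ⟨hA, hL'⟩
    rw [h] at this
    exact this
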